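/- Let θ₀, θ∞, η₀, η∞ be complex constants and let U ⊆ ℂ be an open set not containing 0. Suppose f, g : ℂ → ℂ are differentiable on U, satisfy the Okamoto Hamiltonian system f'(t) = (4 f² g − 2 η∞ t f² − (1+2θ₀) f + 2 η₀ t)/t, g'(t) = −(4 f g² − (1+2θ₀+4 η∞ t f) g + η∞(θ₀+θ∞) t)/t on U, and f(t) ≠ 0 on U. Define x(t) = f(t) and y(t) = (4 f(t)² g(t) − 2 η∞ t f(t)² − (2θ₀+1) f(t) + 2 η₀ t)/f(t)². Then x, y satisfy the Filipuk–Żołądek system x'(t) = x² y/t and y'(t) = α − x y²/t + β/x² + γ t x + δ t/x³ on U, with parameters α = −4 η∞ θ∞, β = 4 η₀(1 + θ₀), γ = 4 η∞², δ = −4 η₀². -/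

import Mathlib

/-- Under `x = f`, `y = (4f²g − 2η∞tf² − (2θ₀+1)f + 2η₀t)/f²`,
solutions of the Okamoto system for PIII are mapped to solutions of the
Filipuk–Żołądek system with `α = −4η∞θ∞`, `β = 4η₀(1+θ₀)`, `γ = 4η∞²`, `δ = −4η₀²`. -/
theorem okamoto_to_FZ (θ₀ θinf η₀ ηinf : ℂ) (U : Set ℂ)
    (hU : IsOpen U) (hU0 : (0 : ℂ) ∉ U) (f g : ℂ → ℂ)
    (hf : ∀ t ∈ U, HasDerivAt f
      ((4 * (f t) ^ 2 * g t - 2 * ηinf * t * (f t) ^ 2 - (1 + 2 * θ₀) * f t + 2 * η₀ * t) / t) t)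
    (hg : ∀ t ∈ U, HasDerivAt g
      (-((4 * f t * (g t) ^ 2 - (1 + 2 * θ₀ + 4 * ηinf * t * f t) * g t
        + ηinf * (θ₀ + θinf) * t) / t)) t)
    (hfne : ∀ t ∈ U, f t ≠ 0)
    (x y : ℂ → ℂ)
    (hx : ∀ t, x t = f t)
    (hy : ∀ t, y t =
      (4 * (f t) ^ 2 * g t - 2 * ηinf * t * (f t) ^ 2 - (2 * θ₀ + 1) * f t + 2 * η₀ * t)
        / (f t) ^ 2) :
    ∀ t ∈ U,
      HasDerivAt x ((x t) ^ 2 * y t / t) t ∧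
      HasDerivAt y ((-4 * ηinf * θinf) - x t * (y t) ^ 2 / t
        + (4 * η₀ * (1 + θ₀)) / (x t) ^ 2 + (4 * ηinf ^ 2) * t * x t
        + (-4 * η₀ ^ 2) * t / (x t) ^ 3) t := by
  intro t ht
  have ht0 : (t : ℂ) ≠ 0 := fun h => hU0 (h ▸ ht)
  have hft : f t ≠ 0 := hfne t ht
  have hfd := hf t ht
  have hgd := hg t ht
  have hxf : x = f := funext hx
  have hyfun : y = fun s =>
      (4 * (f s) ^ 2 * g s - 2 * ηinf * s * (f s) ^ 2 - (2 * θ₀ + 1) * f s + 2 * η₀ * s)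
        / (f s) ^ 2 := funext hy
  constructor
  · rw [hxf]
    convert hfd using 1
    rw [hy]
    field_simp
    ring
  · rw [hyfun]
    have h1 := ((hasDerivAt_const t (4 : ℂ)).mul (hfd.pow 2)).mul hgd
    have h2 := ((hasDerivAt_const t (2 * ηinf)).mul (hasDerivAt_id t)).mul (hfd.pow 2)
    have h3 := (hasDerivAt_const t (2 * θ₀ + 1)).mul hfd
    have h4 := (hasDerivAt_const t (2 * η₀)).mul (hasDerivAt_id t)
    have hnum := ((h1.sub h2).sub h3).add h4
    have hq := hnum.div (hfd.pow 2) (pow_ne_zero 2 hft)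
    convert hq using 1
    · rfl
    · rfl
    · funext s; rfl
    simp only [hxf, id_eq, Pi.mul_apply, Pi.pow_apply, Pi.sub_apply, Pi.add_apply, Pi.div_apply]
    push_cast
    field_simp [ht0, hft]
    ring
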